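/- arXiv:2402.11925 — 3 statements merged into one kernel-verified Lean document; each statement's English description precedes it below -/
import Mathlib

section
/- Let $\ell \geq 2$ be a real number, and constants $h, \tau, \nu, t, s > 0$, $\rho \in (0,1]$. Define $\varphi = (h\nu)^{1/(\ell-1)} \cdot \tau / t$ and $p^* = \frac{\varphi \rho^{1/(\ell-1)}}{1 + \varphi \rho^{\ell/(\ell-1)}}\left(s\rho + \frac{\ell}{2}\right)$. Then $p^*$ satisfies the stationarity equation $\frac{\ell (p^*)^{\ell-1}}{h\tau^{\ell-1}} = \frac{\ell \nu \rho}{t^{\ell-1}}\left((s - p^*)\rho + \frac{\ell}{2}\right)^{\ell-1}$. -/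
theorem prefetch_stationarity
    (ℓ h τ ν t ρ s : ℝ) (hℓ : 2 ≤ ℓ) (hh : 0 < h) (hτ : 0 < τ)
    (hν : 0 < ν) (ht : 0 < t) (hρ0 : 0 < ρ) (hρ1 : ρ ≤ 1) (hs : 0 < s)
    (φ pstar : ℝ)
    (hφ : φ = (h * ν) ^ (1 / (ℓ - 1)) * τ / t)
    (hp : pstar = φ * ρ ^ (1 / (ℓ - 1)) / (1 + φ * ρ ^ (ℓ / (ℓ - 1))) *
        (s * ρ + ℓ / 2)) :
    ℓ * pstar ^ (ℓ - 1) / (h * τ ^ (ℓ - 1)) =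
      ℓ * ν * ρ / t ^ (ℓ - 1) * ((s - pstar) * ρ + ℓ / 2) ^ (ℓ - 1) := by
  have ha : 0 < ℓ - 1 := by linarith
  have hφ0 : 0 < φ := by rw [hφ]; positivity
  have hX : 0 < s * ρ + ℓ / 2 := by
    have := mul_pos hs hρ0; linarith
  have hD : 0 < 1 + φ * ρ ^ (ℓ / (ℓ - 1)) := by positivity
  have hρa : (ρ ^ (1 / (ℓ - 1))) ^ (ℓ - 1) = ρ := by
    rw [← Real.rpow_mul hρ0.le, one_div, inv_mul_cancel₀ ha.ne', Real.rpow_one]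
  have hφa : φ ^ (ℓ - 1) = h * ν * τ ^ (ℓ - 1) / t ^ (ℓ - 1) := by
    rw [hφ, Real.div_rpow (by positivity) ht.le,
      Real.mul_rpow (by positivity) hτ.le, ← Real.rpow_mul (by positivity),
      one_div, inv_mul_cancel₀ ha.ne', Real.rpow_one]
  have key : ρ ^ (1 / (ℓ - 1)) * ρ = ρ ^ (ℓ / (ℓ - 1)) := by
    nth_rewrite 2 [← Real.rpow_one ρ]
    rw [← Real.rpow_add hρ0]
    congr 1
    field_simp
    ring
  have hps : pstar * ρ = φ * ρ ^ (ℓ / (ℓ - 1)) / (1 + φ * ρ ^ (ℓ / (ℓ - 1))) *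
      (s * ρ + ℓ / 2) := by
    rw [hp, ← key]; ring
  have hY : (s - pstar) * ρ + ℓ / 2 =
      (s * ρ + ℓ / 2) / (1 + φ * ρ ^ (ℓ / (ℓ - 1))) := by
    have h1 : (s - pstar) * ρ + ℓ / 2 = (s * ρ + ℓ / 2) - pstar * ρ := by ring
    rw [h1, hps]
    field_simp
    ring
  have hpa : pstar ^ (ℓ - 1) =
      h * ν * τ ^ (ℓ - 1) / t ^ (ℓ - 1) * ρ * (s * ρ + ℓ / 2) ^ (ℓ - 1) /
        (1 + φ * ρ ^ (ℓ / (ℓ - 1))) ^ (ℓ - 1) := by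
    rw [hp, Real.mul_rpow (by positivity) hX.le,
      Real.div_rpow (by positivity) hD.le,
      Real.mul_rpow hφ0.le (by positivity), hρa, hφa]
    ring
  rw [hY, Real.div_rpow hX.le hD.le, hpa]
  have hta := Real.rpow_pos_of_pos ht (ℓ - 1)
  have hτa := Real.rpow_pos_of_pos hτ (ℓ - 1)
  have hDa := Real.rpow_pos_of_pos hD (ℓ - 1)
  field_simp
end

section
/- Let $\ell \geq 2$, $h, \tau, \nu, t, s > 0$, $\rho \in (0,1]$, and let $f(p) = \frac{p^\ell}{h\tau^{\ell-1}} + \frac{\nu}{t^{\ell-1}}\left((s-p)\rho + \frac{\ell}{2}\right)^\ell$. Define $\varphi = (h\nu)^{1/(\ell-1)} \tau / t$ and $p^* = \frac{\varphi \rho^{1/(\ell-1)}}{1 + \varphi \rho^{\ell/(\ell-1)}}\left(s\rho + \frac{\ell}{2}\right)$. If $p^* \leq s$, then $f(p^*) \leq f(p)$ for all $p \in [0, s]$. -/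
lemma tangent_rpow {a x ℓ : ℝ} (ha : 0 < a) (hx : 0 ≤ x) (hℓ : 1 ≤ ℓ) :
    a ^ ℓ + ℓ * a ^ (ℓ - 1) * (x - a) ≤ x ^ ℓ := by
  have hu : -1 ≤ x / a - 1 := by
    have : 0 ≤ x / a := div_nonneg hx ha.le
    linarith
  have hb := one_add_mul_self_le_rpow_one_add hu hℓ
  rw [show 1 + (x / a - 1) = x / a by ring] at hb
  have haℓ : (0:ℝ) < a ^ ℓ := Real.rpow_pos_of_pos ha _
  have hdiv : (x / a) ^ ℓ = x ^ ℓ / a ^ ℓ := Real.div_rpow hx ha.le ℓ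
  have hsub : a ^ (ℓ - 1) = a ^ ℓ / a := by
    rw [Real.rpow_sub ha, Real.rpow_one]
  have := mul_le_mul_of_nonneg_left hb haℓ.le
  rw [hdiv] at this
  have hane : a ≠ 0 := ha.ne'
  have haℓne : a ^ ℓ ≠ 0 := haℓ.ne'
  calc a ^ ℓ + ℓ * a ^ (ℓ - 1) * (x - a)
      = a ^ ℓ * (1 + ℓ * (x / a - 1)) := by rw [hsub]; field_simp
    _ ≤ a ^ ℓ * (x ^ ℓ / a ^ ℓ) := this
    _ = x ^ ℓ := by field_simp

theorem prefetch_global_optimality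
    (ℓ h τ ν t ρ s : ℝ) (hℓ : 2 ≤ ℓ) (hh : 0 < h) (hτ : 0 < τ)
    (hν : 0 < ν) (ht : 0 < t) (hρ0 : 0 < ρ) (hρ1 : ρ ≤ 1) (hs : 0 < s)
    (f : ℝ → ℝ)
    (hf : f = fun p : ℝ =>
      p ^ ℓ / (h * τ ^ (ℓ - 1)) + ν / t ^ (ℓ - 1) * ((s - p) * ρ + ℓ / 2) ^ ℓ)
    (φ pstar : ℝ)
    (hφ : φ = (h * ν) ^ (1 / (ℓ - 1)) * τ / t)
    (hp : pstar = φ * ρ ^ (1 / (ℓ - 1)) / (1 + φ * ρ ^ (ℓ / (ℓ - 1))) *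
        (s * ρ + ℓ / 2))
    (hps : pstar ≤ s) :
    ∀ p ∈ Set.Icc (0 : ℝ) s, f pstar ≤ f p := by
  have hE : (0:ℝ) < ℓ - 1 := by linarith
  have hEne : ℓ - 1 ≠ 0 := hE.ne'
  have hφ0 : 0 < φ := by
    rw [hφ]
    positivity
  have hρr : (0:ℝ) < ρ ^ (1 / (ℓ - 1)) := Real.rpow_pos_of_pos hρ0 _
  have hρr2 : (0:ℝ) < ρ ^ (ℓ / (ℓ - 1)) := Real.rpow_pos_of_pos hρ0 _
  have hden : (0:ℝ) < 1 + φ * ρ ^ (ℓ / (ℓ - 1)) := by positivity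
  have hsum : (0:ℝ) < s * ρ + ℓ / 2 := by positivity
  have hpst0 : 0 < pstar := by rw [hp]; positivity
  set Q : ℝ := (s - pstar) * ρ + ℓ / 2 with hQ
  have hQ0 : 0 < Q := by
    have : 0 ≤ (s - pstar) * ρ := mul_nonneg (by linarith) hρ0.le
    have : (0:ℝ) < ℓ / 2 := by linarith
    rw [hQ]; linarith
  -- key identity: pstar = φ * ρ^(1/(ℓ-1)) * Q
  have hρmul : ρ ^ (1 / (ℓ - 1)) * ρ = ρ ^ (ℓ / (ℓ - 1)) := by
    rw [show ℓ / (ℓ - 1) = 1 / (ℓ - 1) + 1 by field_simp; ring,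
      Real.rpow_add hρ0, Real.rpow_one]
  have hkey : pstar = φ * ρ ^ (1 / (ℓ - 1)) * Q := by
    have h1 : pstar * (1 + φ * ρ ^ (ℓ / (ℓ - 1))) =
        φ * ρ ^ (1 / (ℓ - 1)) * (s * ρ + ℓ / 2) := by
      rw [hp]; field_simp
    have : Q = s * ρ + ℓ / 2 - pstar * ρ := by rw [hQ]; ring
    rw [this]
    linear_combination h1 + φ * pstar * hρmul
  -- stationarity
  have hφpow : φ ^ (ℓ - 1) = h * ν * τ ^ (ℓ - 1) / t ^ (ℓ - 1) := by
    have hhv : ((h * ν) ^ (1 / (ℓ - 1))) ^ (ℓ - 1) = h * ν := by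
      rw [← Real.rpow_mul (by positivity : (0:ℝ) ≤ h * ν),
        show 1 / (ℓ - 1) * (ℓ - 1) = 1 by field_simp, Real.rpow_one]
    rw [hφ, Real.div_rpow (by positivity) ht.le,
      Real.mul_rpow (by positivity) hτ.le, hhv]
  have hℓ1 : (1:ℝ) ≤ ℓ := by linarith
  have hτℓ : (0:ℝ) < τ ^ (ℓ - 1) := Real.rpow_pos_of_pos hτ _
  have htℓ : (0:ℝ) < t ^ (ℓ - 1) := Real.rpow_pos_of_pos ht _
  have hD1 : (0:ℝ) < h * τ ^ (ℓ - 1) := by positivity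
  have hC2 : (0:ℝ) < ν / t ^ (ℓ - 1) := by positivity
  have hρpow : (ρ ^ (1 / (ℓ - 1))) ^ (ℓ - 1) = ρ := by
    rw [← Real.rpow_mul hρ0.le,
      show 1 / (ℓ - 1) * (ℓ - 1) = 1 by field_simp, Real.rpow_one]
  have hstat : pstar ^ (ℓ - 1) * t ^ (ℓ - 1) =
      ρ * ν * Q ^ (ℓ - 1) * (h * τ ^ (ℓ - 1)) := by
    have hps1 : pstar ^ (ℓ - 1) = φ ^ (ℓ - 1) * ρ * Q ^ (ℓ - 1) := by
      rw [hkey, Real.mul_rpow (by positivity) hQ0.le,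
        Real.mul_rpow hφ0.le hρr.le, hρpow]
    rw [hps1, hφpow]
    field_simp
  intro p hpmem
  obtain ⟨hp0, hps'⟩ := hpmem
  rw [hf]
  simp only
  have hQp0 : (0:ℝ) ≤ (s - p) * ρ + ℓ / 2 := by
    have : 0 ≤ (s - p) * ρ := mul_nonneg (by linarith) hρ0.le
    linarith
  have t1 := tangent_rpow hpst0 hp0 hℓ1
  have t2 := tangent_rpow hQ0 hQp0 hℓ1
  have ht2 : Q ^ ℓ + ℓ * Q ^ (ℓ - 1) * ((pstar - p) * ρ) ≤ ((s - p) * ρ + ℓ / 2) ^ ℓ := by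
    have : (s - p) * ρ + ℓ / 2 - Q = (pstar - p) * ρ := by rw [hQ]; ring
    rw [← this]; exact t2
  have e1 : pstar ^ ℓ / (h * τ ^ (ℓ - 1)) + ℓ * pstar ^ (ℓ - 1) * (p - pstar) / (h * τ ^ (ℓ - 1))
      ≤ p ^ ℓ / (h * τ ^ (ℓ - 1)) := by
    rw [← add_div]
    gcongr
  have e2 : ν / t ^ (ℓ - 1) * (Q ^ ℓ) + ν / t ^ (ℓ - 1) * (ℓ * Q ^ (ℓ - 1) * ((pstar - p) * ρ))
      ≤ ν / t ^ (ℓ - 1) * (((s - p) * ρ + ℓ / 2) ^ ℓ) := by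
    rw [← mul_add]
    gcongr
  have hcorr : ℓ * pstar ^ (ℓ - 1) * (p - pstar) / (h * τ ^ (ℓ - 1)) +
      ν / t ^ (ℓ - 1) * (ℓ * Q ^ (ℓ - 1) * ((pstar - p) * ρ)) = 0 := by
    field_simp
    linear_combination (ℓ * (p - pstar)) * hstat
  linarith [e1, e2, hcorr]
end

section
/- Let $n$ be a binomial random variable with parameters $N \in \mathbb{N}$ and success probability $\rho \in [0,1]$, and let $\ell \geq 1$ be a natural number. Then $\mathbb{E}[n^\ell] \leq (N\rho + \ell/2)^\ell$. -/
open Real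

lemma exp_key (u : ℝ) (hu : 0 ≤ u) : (1 - u) * Real.exp (2 * u) ≤ 1 + u := by
  set g : ℝ → ℝ := fun u => 1 + u - (1 - u) * Real.exp (2 * u) with hg
  have hd : ∀ x : ℝ, HasDerivAt g (1 - (1 - 2 * x) * Real.exp (2 * x)) x := by
    intro x
    have h2 : HasDerivAt (fun y : ℝ => 2 * y) 2 x := by
      simpa using (hasDerivAt_id x).const_mul 2
    have he : HasDerivAt (fun y : ℝ => Real.exp (2 * y)) (Real.exp (2 * x) * 2) x := h2.exp
    have h1 : HasDerivAt (fun y : ℝ => 1 - y) (-1) x := by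
      simpa using (hasDerivAt_id x).const_sub 1
    have hm := h1.mul he
    have ha : HasDerivAt (fun y : ℝ => 1 + y) 1 x := by
      simpa using (hasDerivAt_id x).const_add 1
    have := ha.sub hm
    refine this.congr_deriv ?_
    ring
  have hderiv : ∀ x : ℝ, deriv g x = 1 - (1 - 2 * x) * Real.exp (2 * x) :=
    fun x => (hd x).deriv
  have hnn : ∀ x : ℝ, 0 ≤ x → 0 ≤ deriv g x := by
    intro x hx
    rw [hderiv]
    have hpos := Real.exp_pos (2 * x)
    rcases le_or_gt (1 - 2 * x) 0 with h | h
    · nlinarith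
    · have h1 : 1 - 2 * x ≤ Real.exp (-(2 * x)) := by
        have := Real.add_one_le_exp (-(2 * x)); linarith
      have : (1 - 2 * x) * Real.exp (2 * x) ≤ Real.exp (-(2 * x)) * Real.exp (2 * x) :=
        mul_le_mul_of_nonneg_right h1 hpos.le
      rw [← Real.exp_add] at this
      simp at this
      linarith
  have hmono : MonotoneOn g (Set.Ici (0 : ℝ)) := by
    apply monotoneOn_of_deriv_nonneg (convex_Ici 0)
    · exact (Continuous.continuousOn (by fun_prop))
    · intro x hx
      exact (hd x).differentiableAt.differentiableWithinAt
    · intro x hx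
      rw [interior_Ici] at hx
      exact hnn x (le_of_lt hx)
  have h0 : g 0 = 0 := by simp [hg]
  have := hmono (Set.self_mem_Ici) (Set.mem_Ici.mpr hu) hu
  rw [h0] at this
  simp only [hg] at this
  linarith

theorem binomial_moment_upper_bound
    (N : ℕ) (ρ : ℝ) (hρ0 : 0 ≤ ρ) (hρ1 : ρ ≤ 1) (ℓ : ℕ) (hℓ : 1 ≤ ℓ) :
    ∑ k ∈ Finset.range (N + 1),
        (N.choose k : ℝ) * ρ ^ k * (1 - ρ) ^ (N - k) * (k : ℝ) ^ ℓ ≤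
      ((N : ℝ) * ρ + (ℓ : ℝ) / 2) ^ ℓ := by
  have hℓ0 : ℓ ≠ 0 := by omega
  have hℓR : (1:ℝ) ≤ (ℓ:ℝ) := by exact_mod_cast hℓ
  have hRHS0 : (0:ℝ) ≤ (N : ℝ) * ρ + (ℓ : ℝ) / 2 := by
    have : (0:ℝ) ≤ (N:ℝ) * ρ := mul_nonneg (Nat.cast_nonneg N) hρ0
    linarith
  rcases eq_or_lt_of_le hρ0 with hρ | hρ
  · -- ρ = 0
    have hsum : ∑ k ∈ Finset.range (N + 1),
        (N.choose k : ℝ) * ρ ^ k * (1 - ρ) ^ (N - k) * (k : ℝ) ^ ℓ = 0 := by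
      apply Finset.sum_eq_zero
      intro k hk
      rcases Nat.eq_zero_or_pos k with rfl | hk0
      · simp [zero_pow hℓ0]
      · rw [← hρ]
        simp [zero_pow (by omega : k ≠ 0)]
    rw [hsum]
    exact pow_nonneg hRHS0 ℓ
  rcases Nat.eq_zero_or_pos N with rfl | hN
  · simp [zero_pow hℓ0]
    positivity
  -- main case
  set μ : ℝ := (N:ℝ) * ρ with hμdef
  have hμ : 0 < μ := mul_pos (by exact_mod_cast hN) hρ
  have hden : 0 < μ + (ℓ:ℝ)/2 := by linarith
  set t : ℝ := (ℓ:ℝ) / (μ + (ℓ:ℝ)/2) with htdef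
  have ht : 0 < t := div_pos (by linarith) hden
  have htℓ : t * (μ + (ℓ:ℝ)/2) = (ℓ:ℝ) := by
    rw [htdef]
    field_simp
  have hE := Real.exp_pos 1
  -- pointwise bound
  have hpt : ∀ k : ℕ, (k:ℝ) ^ ℓ ≤ ((ℓ:ℝ)/(Real.exp 1 * t))^ℓ * Real.exp (t * k) := by
    intro k
    have hk0 : (0:ℝ) ≤ (k:ℝ) := Nat.cast_nonneg k
    set x : ℝ := t * k / ℓ with hxdef
    have hx0 : 0 ≤ x := by positivity
    have hex : Real.exp 1 * x ≤ Real.exp x := by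
      have h1 : x ≤ Real.exp (x - 1) := by
        have := Real.add_one_le_exp (x - 1); linarith
      calc Real.exp 1 * x ≤ Real.exp 1 * Real.exp (x - 1) :=
            mul_le_mul_of_nonneg_left h1 hE.le
        _ = Real.exp x := by rw [← Real.exp_add]; ring_nf
    have hbase : Real.exp 1 * t * (k:ℝ) ≤ (ℓ:ℝ) * Real.exp x := by
      have h2 : (ℓ:ℝ) * (Real.exp 1 * x) ≤ (ℓ:ℝ) * Real.exp x :=
        mul_le_mul_of_nonneg_left hex (by linarith)
      have h3 : (ℓ:ℝ) * (Real.exp 1 * x) = Real.exp 1 * t * (k:ℝ) := by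
        rw [hxdef]; field_simp
      linarith
    have hpow : (Real.exp 1 * t * (k:ℝ))^ℓ ≤ ((ℓ:ℝ) * Real.exp x)^ℓ :=
      pow_le_pow_left₀ (by positivity) hbase ℓ
    have hexp : (Real.exp x)^ℓ = Real.exp (t * k) := by
      rw [← Real.exp_nat_mul, hxdef]
      congr 1
      field_simp
    have het : (0:ℝ) < (Real.exp 1 * t)^ℓ := by positivity
    rw [mul_pow, mul_pow, mul_pow] at hpow
    rw [div_pow, div_mul_eq_mul_div, le_div_iff₀ het]
    calc (k:ℝ)^ℓ * (Real.exp 1 * t)^ℓ = Real.exp 1 ^ ℓ * t ^ ℓ * (k:ℝ)^ℓ := by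
          rw [mul_pow]; ring
      _ ≤ (ℓ:ℝ)^ℓ * Real.exp x ^ ℓ := hpow
      _ = (ℓ:ℝ)^ℓ * Real.exp (t * k) := by rw [hexp]
  -- key exp inequality: μ * (exp t - 1) ≤ ℓ
  have hμexp : μ * (Real.exp t - 1) ≤ (ℓ:ℝ) := by
    have hkey := exp_key (t/2) (by linarith)
    have h1 : (1 - t/2) * Real.exp t ≤ 1 + t/2 := by
      have : 2 * (t/2) = t := by ring
      rwa [this] at hkey
    have h3 := mul_le_mul_of_nonneg_right h1 hden.le
    have h4 : Real.exp t * (t * (μ + (ℓ:ℝ)/2)) = Real.exp t * (ℓ:ℝ) := by rw [htℓ]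
    nlinarith [h3, h4]
  -- the chain
  have hbpos : (0:ℝ) ≤ ρ * Real.exp t + (1 - ρ) := by
    have := Real.exp_pos t
    nlinarith
  calc ∑ k ∈ Finset.range (N + 1),
        (N.choose k : ℝ) * ρ ^ k * (1 - ρ) ^ (N - k) * (k : ℝ) ^ ℓ
      ≤ ∑ k ∈ Finset.range (N + 1),
        (N.choose k : ℝ) * ρ ^ k * (1 - ρ) ^ (N - k) *
          (((ℓ:ℝ)/(Real.exp 1 * t))^ℓ * Real.exp (t * k)) := by
        apply Finset.sum_le_sum
        intro k hk
        apply mul_le_mul_of_nonneg_left (hpt k)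
        have h1ρ : (0:ℝ) ≤ 1 - ρ := by linarith
        positivity
    _ = ((ℓ:ℝ)/(Real.exp 1 * t))^ℓ * ∑ k ∈ Finset.range (N + 1),
          (ρ * Real.exp t) ^ k * (1 - ρ) ^ (N - k) * (N.choose k : ℝ) := by
        rw [Finset.mul_sum]
        apply Finset.sum_congr rfl
        intro k hk
        have : Real.exp (t * k) = (Real.exp t)^k := by
          rw [← Real.exp_nat_mul]; ring_nf
        rw [this, mul_pow]
        ring
    _ = ((ℓ:ℝ)/(Real.exp 1 * t))^ℓ * (ρ * Real.exp t + (1 - ρ))^N := by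
        rw [add_pow]
    _ ≤ ((ℓ:ℝ)/(Real.exp 1 * t))^ℓ * Real.exp (μ * (Real.exp t - 1)) := by
        apply mul_le_mul_of_nonneg_left ?_ (by positivity)
        have hb : ρ * Real.exp t + (1 - ρ) ≤ Real.exp (ρ * (Real.exp t - 1)) := by
          have := Real.add_one_le_exp (ρ * (Real.exp t - 1))
          nlinarith
        calc (ρ * Real.exp t + (1 - ρ))^N ≤ (Real.exp (ρ * (Real.exp t - 1)))^N :=
              pow_le_pow_left₀ hbpos hb N
          _ = Real.exp (μ * (Real.exp t - 1)) := by
              rw [← Real.exp_nat_mul, hμdef]; ring_nf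
    _ ≤ ((ℓ:ℝ)/(Real.exp 1 * t))^ℓ * Real.exp (ℓ:ℝ) := by
        apply mul_le_mul_of_nonneg_left ?_ (by positivity)
        exact Real.exp_le_exp.mpr hμexp
    _ = (μ + (ℓ:ℝ)/2)^ℓ := by
        have h5 : Real.exp (ℓ:ℝ) = (Real.exp 1)^ℓ := by
          rw [← Real.exp_nat_mul]; ring_nf
        rw [h5, ← mul_pow]
        congr 1
        rw [div_mul_eq_mul_div, mul_comm ((ℓ:ℝ)) (Real.exp 1)]
        rw [mul_div_mul_left _ _ (ne_of_gt hE)]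
        rw [htdef]
        field_simp
end
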